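/- Letting H₉ be the graph defined below, for every ε > 0 there exists N such that for all n ≥ N, Dist(n, Forb(H₉)) ≤ ((3 − √5)/4 + ε) · binom(n,2). (Equivalently, lim sup_{n→∞} Dist(n, Forb(H₉)) / binom(n,2) ≤ (3 − √5)/4.) -/

import Mathlib

open Filter

/-- The edit distance between two simple graphs on the same finite vertex set:
the number of unordered pairs that are an edge in exactly one of the two graphs. -/
noncomputable def editDist {V : Type} [Fintype V] (G G' : SimpleGraph V) : ℕ :=
  (symmDiff G.edgeSet G'.edgeSet).ncard

/-- A graph `G` is `H`-free if there is no graph embedding of `H` into `G`. -/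
def IsHFree {W V : Type} (H : SimpleGraph W) (G : SimpleGraph V) : Prop :=
  ¬ Nonempty (H ↪g G)

/-- `Dist(G, Forb(H))`: minimum edit distance from `G` to an `H`-free graph on the
same vertex set. -/
noncomputable def distForb {W V : Type} [Fintype V] (H : SimpleGraph W)
    (G : SimpleGraph V) : ℕ :=
  sInf { d | ∃ G' : SimpleGraph V, IsHFree H G' ∧ d = editDist G G' }

/-- `Dist(n, Forb(H))`: maximum of `Dist(G, Forb(H))` over `n`-vertex graphs `G`. -/
noncomputable def distForbN {W : Type} (H : SimpleGraph W) (n : ℕ) : ℕ :=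
  sSup { d | ∃ G : SimpleGraph (Fin n), d = distForb H G }


/-- The graph `H₉` on vertex set `ℤ/9ℤ`: distinct `i`, `j` are adjacent iff
`i - j ≡ ±1` or `±2 (mod 9)`, or both `i` and `j` are divisible by `3`. -/
def H9 : SimpleGraph (ZMod 9) :=
  SimpleGraph.fromRel (fun i j => i - j = 1 ∨ i - j = 2 ∨ (3 ∣ i ∧ 3 ∣ j))

/-! ### Auxiliary development -/

instance : DecidableRel ((· ∣ ·) : ZMod 9 → ZMod 9 → Prop) := fun a b =>
  decidable_of_iff (∃ c, b = a * c) dvd_def.symm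

instance : DecidableRel H9.Adj := fun a b =>
  decidable_of_iff' _ (SimpleGraph.fromRel_adj _ a b)

/- Key finite check for construction A (4 independent parts, parts 0 and 1
completely joined): no suitable coloring of `H9` exists. -/
set_option maxRecDepth 100000 in
set_option synthInstance.maxSize 2000 in
set_option synthInstance.maxHeartbeats 1000000 in
theorem keyA' : ∀ x0 : Fin 4,
    ∀ x1 : Fin 4, x0 ≠ x1 →
    ∀ x2 : Fin 4, x0 ≠ x2 → x1 ≠ x2 →
    ∀ x3 : Fin 4, x0 ≠ x3 → x1 ≠ x3 → x2 ≠ x3 →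
    ∀ x4 : Fin 4, ¬(x0 = 0 ∧ x4 = 1) → ¬(x4 = 0 ∧ x0 = 1) → ¬(x1 = 0 ∧ x4 = 1) → ¬(x4 = 0 ∧ x1 = 1) → x2 ≠ x4 → x3 ≠ x4 →
    ∀ x5 : Fin 4, ¬(x0 = 0 ∧ x5 = 1) → ¬(x5 = 0 ∧ x0 = 1) → ¬(x1 = 0 ∧ x5 = 1) → ¬(x5 = 0 ∧ x1 = 1) → ¬(x2 = 0 ∧ x5 = 1) → ¬(x5 = 0 ∧ x2 = 1) → x3 ≠ x5 → x4 ≠ x5 →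
    ∀ x6 : Fin 4, x0 ≠ x6 → ¬(x1 = 0 ∧ x6 = 1) → ¬(x6 = 0 ∧ x1 = 1) → ¬(x2 = 0 ∧ x6 = 1) → ¬(x6 = 0 ∧ x2 = 1) → x3 ≠ x6 → x4 ≠ x6 → x5 ≠ x6 →
    ∀ x7 : Fin 4, x0 ≠ x7 → ¬(x1 = 0 ∧ x7 = 1) → ¬(x7 = 0 ∧ x1 = 1) → ¬(x2 = 0 ∧ x7 = 1) → ¬(x7 = 0 ∧ x2 = 1) → ¬(x3 = 0 ∧ x7 = 1) → ¬(x7 = 0 ∧ x3 = 1) → ¬(x4 = 0 ∧ x7 = 1) → ¬(x7 = 0 ∧ x4 = 1) → x5 ≠ x7 → x6 ≠ x7 →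
    ∀ x8 : Fin 4, x0 ≠ x8 → x1 ≠ x8 → ¬(x2 = 0 ∧ x8 = 1) → ¬(x8 = 0 ∧ x2 = 1) → ¬(x3 = 0 ∧ x8 = 1) → ¬(x8 = 0 ∧ x3 = 1) → ¬(x4 = 0 ∧ x8 = 1) → ¬(x8 = 0 ∧ x4 = 1) → ¬(x5 = 0 ∧ x8 = 1) → ¬(x8 = 0 ∧ x5 = 1) → x6 ≠ x8 → x7 ≠ x8 →
    False := by decide

/-- Black/white pair functions for construction A. -/
def BbA (i j : Fin 4) : Bool := ((i == 0) && (j == 1)) || ((i == 1) && (j == 0))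
def WwA (i j : Fin 4) : Bool := i == j

/-- Black/white pair functions for construction B (two cliques). -/
def BbB (i j : Fin 4) : Bool := (i.val / 2) == (j.val / 2)
def WwB (_ _ : Fin 4) : Bool := false

lemma freeA : ∀ φ : ZMod 9 → Fin 4,
    (∀ i j, H9.Adj i j → WwA (φ i) (φ j) = false) →
    (∀ i j, i ≠ j → ¬H9.Adj i j → BbA (φ i) (φ j) = false) → False := by
  intro φ h1 h2
  have hne : ∀ i j : ZMod 9, H9.Adj i j → φ i ≠ φ j := by
    intro i j h
    have := h1 i j h
    simpa [WwA] using this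
  have hno : ∀ i j : ZMod 9, i ≠ j → ¬H9.Adj i j → ¬(φ i = 0 ∧ φ j = 1) := by
    intro i j hij hnadj hc
    have h := h2 i j hij hnadj
    rw [hc.1, hc.2] at h
    exact absurd h (by decide)
  exact keyA' (φ 0) (φ 1)
    (hne 0 1 (by decide)) (φ 2)
    (hne 0 2 (by decide))
    (hne 1 2 (by decide)) (φ 3)
    (hne 0 3 (by decide))
    (hne 1 3 (by decide))
    (hne 2 3 (by decide)) (φ 4)
    (hno 0 4 (by decide) (by decide)) (hno 4 0 (by decide) (by decide))
    (hno 1 4 (by decide) (by decide)) (hno 4 1 (by decide) (by decide))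
    (hne 2 4 (by decide))
    (hne 3 4 (by decide)) (φ 5)
    (hno 0 5 (by decide) (by decide)) (hno 5 0 (by decide) (by decide))
    (hno 1 5 (by decide) (by decide)) (hno 5 1 (by decide) (by decide))
    (hno 2 5 (by decide) (by decide)) (hno 5 2 (by decide) (by decide))
    (hne 3 5 (by decide))
    (hne 4 5 (by decide)) (φ 6)
    (hne 0 6 (by decide))
    (hno 1 6 (by decide) (by decide)) (hno 6 1 (by decide) (by decide))
    (hno 2 6 (by decide) (by decide)) (hno 6 2 (by decide) (by decide))
    (hne 3 6 (by decide))
    (hne 4 6 (by decide))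
    (hne 5 6 (by decide)) (φ 7)
    (hne 0 7 (by decide))
    (hno 1 7 (by decide) (by decide)) (hno 7 1 (by decide) (by decide))
    (hno 2 7 (by decide) (by decide)) (hno 7 2 (by decide) (by decide))
    (hno 3 7 (by decide) (by decide)) (hno 7 3 (by decide) (by decide))
    (hno 4 7 (by decide) (by decide)) (hno 7 4 (by decide) (by decide))
    (hne 5 7 (by decide))
    (hne 6 7 (by decide)) (φ 8)
    (hne 0 8 (by decide))
    (hne 1 8 (by decide))
    (hno 2 8 (by decide) (by decide)) (hno 8 2 (by decide) (by decide))
    (hno 3 8 (by decide) (by decide)) (hno 8 3 (by decide) (by decide))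
    (hno 4 8 (by decide) (by decide)) (hno 8 4 (by decide) (by decide))
    (hno 5 8 (by decide) (by decide)) (hno 8 5 (by decide) (by decide))
    (hne 6 8 (by decide))
    (hne 7 8 (by decide))

lemma freeB : ∀ φ : ZMod 9 → Fin 4,
    (∀ i j, H9.Adj i j → WwB (φ i) (φ j) = false) →
    (∀ i j, i ≠ j → ¬H9.Adj i j → BbB (φ i) (φ j) = false) → False := by
  intro φ _ h2
  have h14 := h2 1 4 (by decide) (by decide)
  have h47 := h2 4 7 (by decide) (by decide)
  have h17 := h2 1 7 (by decide) (by decide)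
  revert h14 h47 h17
  generalize φ 1 = a; generalize φ 4 = b; generalize φ 7 = c
  revert a b c; decide

section EditDist
open Finset

variable {V : Type} [Fintype V] [DecidableEq V]

/-- The "difference graph" of two simple graphs. -/
def diffG (G G' : SimpleGraph V) : SimpleGraph V where
  Adj u v := ¬(G.Adj u v ↔ G'.Adj u v)
  symm := by
    constructor
    intro u v h
    rw [G.adj_comm, G'.adj_comm] at h
    exact h
  loopless := ⟨fun u h => h (iff_of_false (G.irrefl) (G'.irrefl))⟩

instance (G G' : SimpleGraph V) [DecidableRel G.Adj] [DecidableRel G'.Adj] :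
    DecidableRel (diffG G G').Adj := fun u v =>
  inferInstanceAs (Decidable (¬(G.Adj u v ↔ G'.Adj u v)))

lemma editDist_cnt (G G' : SimpleGraph V) [DecidableRel G.Adj] [DecidableRel G'.Adj] :
    2 * editDist G G' =
      #(univ.filter fun p : V × V => ¬(G.Adj p.1 p.2 ↔ G'.Adj p.1 p.2)) := by
  have hset : symmDiff G.edgeSet G'.edgeSet = (diffG G G').edgeSet := by
    ext e
    induction e with
    | _ u v =>
      simp only [Set.mem_symmDiff, SimpleGraph.mem_edgeSet]
      show _ ↔ (diffG G G').Adj u v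
      unfold diffG
      tauto
  have h1 : editDist G G' = (diffG G G').edgeFinset.card := by
    unfold editDist
    rw [hset, Set.ncard_eq_toFinset_card' ((diffG G G').edgeSet)]
    exact congrArg Finset.card (Set.toFinset_congr rfl)
  rw [h1, SimpleGraph.two_mul_card_edgeFinset]
  apply Finset.card_bij (fun p _ => p) <;> simp [diffG]
  · intro a b h; exact (Finset.mem_filter.mp h).2
  · intro a b h; exact Finset.mem_filter.mpr ⟨Finset.mem_univ _, h⟩

end EditDist

section Machinery
open Finset

variable {n : ℕ} (G : SimpleGraph (Fin n)) [DecidableRel G.Adj]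
variable (Bb Ww : Fin 4 → Fin 4 → Bool)

/-- The graph built from `G`, a partition map `σ`, and pair-type functions `Bb` (forced
complete), `Ww` (forced empty); other pairs keep the adjacency of `G`. -/
def cg (hB : ∀ i j, Bb i j = Bb j i) (hW : ∀ i j, Ww i j = Ww j i)
    (σ : Fin n → Fin 4) : SimpleGraph (Fin n) where
  Adj u v := u ≠ v ∧ (Bb (σ u) (σ v) = true ∨ (Ww (σ u) (σ v) = false ∧ G.Adj u v))
  symm := by
    constructor
    rintro u v ⟨h1, h2⟩
    refine ⟨Ne.symm h1, ?_⟩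
    rcases h2 with h | ⟨hw, ha⟩
    · exact Or.inl (by rw [hB (σ v) (σ u)]; exact h)
    · exact Or.inr ⟨by rw [hW (σ v) (σ u)]; exact hw, ha.symm⟩
  loopless := ⟨fun u h => h.1 rfl⟩

instance (hB : ∀ i j, Bb i j = Bb j i) (hW : ∀ i j, Ww i j = Ww j i)
    (σ : Fin n → Fin 4) : DecidableRel (cg G Bb Ww hB hW σ).Adj := fun u v =>
  inferInstanceAs (Decidable (u ≠ v ∧ (Bb (σ u) (σ v) = true ∨
    (Ww (σ u) (σ v) = false ∧ G.Adj u v))))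

/-- If no valid "coloring" of `H9` exists, then the constructed graph is `H9`-free. -/
lemma cg_free (hB : ∀ i j, Bb i j = Bb j i) (hW : ∀ i j, Ww i j = Ww j i)
    (hdisj : ∀ i j, Bb i j = true → Ww i j = true → False)
    (hfree : ∀ φ : ZMod 9 → Fin 4,
      (∀ i j, H9.Adj i j → Ww (φ i) (φ j) = false) →
      (∀ i j, i ≠ j → ¬H9.Adj i j → Bb (φ i) (φ j) = false) → False)
    (σ : Fin n → Fin 4) : IsHFree H9 (cg G Bb Ww hB hW σ) := by
  rintro ⟨e⟩
  apply hfree (fun i => σ (e i))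
  · intro i j hij
    have hadj : (cg G Bb Ww hB hW σ).Adj (e i) (e j) := e.map_rel_iff.mpr hij
    obtain ⟨-, h2⟩ := hadj
    by_contra hW'
    rw [Bool.not_eq_false] at hW'
    rcases h2 with h | ⟨hw, -⟩
    · exact hdisj _ _ h hW'
    · rw [hW'] at hw; exact absurd hw (by simp)
  · intro i j hij hnadj
    have hne : e i ≠ e j := fun h => hij (e.injective h)
    have hnadj' : ¬(cg G Bb Ww hB hW σ).Adj (e i) (e j) := fun h =>
      hnadj (e.map_rel_iff.mp h)
    by_contra hBb
    rw [Bool.not_eq_false] at hBb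
    exact hnadj' ⟨hne, Or.inl hBb⟩

variable (x : Fin 4 → ℝ)

lemma prod_two_of_ne {u v : Fin n} (huv : u ≠ v) (h : Fin n → ℝ)
    (hone : ∀ w, w ≠ u → w ≠ v → h w = 1) : ∏ w, h w = h u * h v := by
  rw [← Finset.prod_pair huv]
  symm
  apply Finset.prod_subset (Finset.subset_univ _)
  intro w _ hw
  simp only [Finset.mem_insert, Finset.mem_singleton] at hw
  push_neg at hw
  exact hone w hw.1 hw.2

lemma marg (hx1 : ∑ i, x i = 1) {u v : Fin n} (huv : u ≠ v) (g : Fin 4 → Fin 4 → ℝ) :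
    ∑ σ : Fin n → Fin 4, (∏ w, x (σ w)) * g (σ u) (σ v)
      = ∑ i : Fin 4, ∑ j : Fin 4, x i * x j * g i j := by
  have key : ∀ i j : Fin 4,
      ∑ σ : Fin n → Fin 4, (∏ w, x (σ w)) *
        ((if σ u = i then (1:ℝ) else 0) * (if σ v = j then 1 else 0)) = x i * x j := by
    intro i j
    have h1 : ∀ σ : Fin n → Fin 4,
        (∏ w, x (σ w)) * ((if σ u = i then (1:ℝ) else 0) * (if σ v = j then 1 else 0))
          = ∏ w, (x (σ w) * (if w = u then (if σ w = i then 1 else 0)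
              else if w = v then (if σ w = j then 1 else 0) else 1)) := by
      intro σ
      rw [Finset.prod_mul_distrib]
      congr 1
      rw [prod_two_of_ne huv _ (fun w hwu hwv => by simp [hwu, hwv])]
      simp [huv, Ne.symm huv]
    rw [Finset.sum_congr rfl (fun σ _ => h1 σ)]
    rw [← Fintype.piFinset_univ,
      ← Finset.prod_univ_sum (fun _ => (univ : Finset (Fin 4)))
        (fun w t => x t * (if w = u then (if t = i then (1:ℝ) else 0)
          else if w = v then (if t = j then 1 else 0) else 1))]
    rw [prod_two_of_ne huv _ (fun w hwu hwv => by simp [hwu, hwv, hx1])]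
    have hu : ∑ t : Fin 4, (x t * (if u = u then (if t = i then (1:ℝ) else 0)
        else if u = v then (if t = j then 1 else 0) else 1)) = x i := by
      simp [Finset.sum_ite_eq', mul_ite]
    have hv : ∑ t : Fin 4, (x t * (if v = u then (if t = i then (1:ℝ) else 0)
        else if v = v then (if t = j then 1 else 0) else 1)) = x j := by
      simp [Ne.symm huv, Finset.sum_ite_eq', mul_ite]
    rw [hu, hv]
  have h2 : ∀ σ : Fin n → Fin 4,
      (∏ w, x (σ w)) * g (σ u) (σ v)
        = ∑ i : Fin 4, ∑ j : Fin 4, (∏ w, x (σ w)) *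
            ((if σ u = i then (1:ℝ) else 0) * (if σ v = j then 1 else 0)) * g i j := by
    intro σ
    rw [Finset.sum_eq_single (σ u)]
    · rw [Finset.sum_eq_single (σ v)]
      · simp
      · intro j _ hj; simp [Ne.symm hj]
      · simp
    · intro i _ hi
      apply Finset.sum_eq_zero
      intro j _
      simp [Ne.symm hi]
    · simp
  rw [Finset.sum_congr rfl (fun σ _ => h2 σ), Finset.sum_comm]
  apply Finset.sum_congr rfl
  intro i _
  rw [Finset.sum_comm]
  apply Finset.sum_congr rfl
  intro j _
  rw [← Finset.sum_mul, key i j]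

lemma sum_weights (hx1 : ∑ i, x i = 1) :
    ∑ σ : Fin n → Fin 4, ∏ w, x (σ w) = 1 := by
  rw [← Fintype.piFinset_univ,
    ← Finset.prod_univ_sum (fun _ => (univ : Finset (Fin 4))) (fun _ t => x t)]
  simp [hx1]

end Machinery

section ExistsGood
open Finset

variable {n : ℕ} (G : SimpleGraph (Fin n)) [DecidableRel G.Adj]
variable (Bb Ww : Fin 4 → Fin 4 → Bool) (x : Fin 4 → ℝ)

lemma exists_good (hB : ∀ i j, Bb i j = Bb j i) (hW : ∀ i j, Ww i j = Ww j i)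
    (hx0 : ∀ i, 0 < x i) (hx1 : ∑ i, x i = 1) :
    ∃ σ : Fin n → Fin 4,
      (#(univ.filter fun p : Fin n × Fin n =>
          ¬(G.Adj p.1 p.2 ↔ (cg G Bb Ww hB hW σ).Adj p.1 p.2)) : ℝ)
        ≤ (#(univ.filter fun p : Fin n × Fin n => G.Adj p.1 p.2) : ℝ) *
            (∑ i : Fin 4, ∑ j : Fin 4, x i * x j * (if Ww i j then 1 else 0))
          + (#(univ.filter fun p : Fin n × Fin n => p.1 ≠ p.2 ∧ ¬ G.Adj p.1 p.2) : ℝ) *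
            (∑ i : Fin 4, ∑ j : Fin 4, x i * x j * (if Bb i j then 1 else 0)) := by
  classical
  set cW : ℝ := ∑ i : Fin 4, ∑ j : Fin 4, x i * x j * (if Ww i j then 1 else 0) with hcW
  set cB : ℝ := ∑ i : Fin 4, ∑ j : Fin 4, x i * x j * (if Bb i j then 1 else 0) with hcB
  set e2 : ℕ := #(univ.filter fun p : Fin n × Fin n => G.Adj p.1 p.2) with he2
  set a2 : ℕ := #(univ.filter fun p : Fin n × Fin n => p.1 ≠ p.2 ∧ ¬ G.Adj p.1 p.2) with ha2
  set cnt : (Fin n → Fin 4) → ℕ := fun σ =>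
    #(univ.filter fun p : Fin n × Fin n =>
      ¬(G.Adj p.1 p.2 ↔ (cg G Bb Ww hB hW σ).Adj p.1 p.2)) with hcnt
  -- the weighted average of cnt is at most e2 * cW + a2 * cB
  have havg : ∑ σ : Fin n → Fin 4, (∏ w, x (σ w)) * (cnt σ : ℝ)
      ≤ (e2 : ℝ) * cW + (a2 : ℝ) * cB := by
    have hcount : ∀ σ, (cnt σ : ℝ) = ∑ p : Fin n × Fin n,
        (if ¬(G.Adj p.1 p.2 ↔ (cg G Bb Ww hB hW σ).Adj p.1 p.2) then (1:ℝ) else 0) := by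
      intro σ
      show (#(univ.filter fun p : Fin n × Fin n =>
        ¬(G.Adj p.1 p.2 ↔ (cg G Bb Ww hB hW σ).Adj p.1 p.2)) : ℝ) = _
      rw [Finset.card_filter]
      push_cast
      rfl
    have step1 : ∑ σ : Fin n → Fin 4, (∏ w, x (σ w)) * (cnt σ : ℝ)
        = ∑ p : Fin n × Fin n, ∑ σ : Fin n → Fin 4, (∏ w, x (σ w)) *
            (if ¬(G.Adj p.1 p.2 ↔ (cg G Bb Ww hB hW σ).Adj p.1 p.2) then (1:ℝ) else 0) := by
      rw [Finset.sum_comm]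
      apply Finset.sum_congr rfl
      intro σ _
      rw [hcount σ, Finset.mul_sum]
    rw [step1]
    have step2 : ∀ p : Fin n × Fin n,
        ∑ σ : Fin n → Fin 4, (∏ w, x (σ w)) *
            (if ¬(G.Adj p.1 p.2 ↔ (cg G Bb Ww hB hW σ).Adj p.1 p.2) then (1:ℝ) else 0)
          ≤ (if G.Adj p.1 p.2 then cW else 0)
            + (if p.1 ≠ p.2 ∧ ¬G.Adj p.1 p.2 then cB else 0) := by
      rintro ⟨u, v⟩
      by_cases huv : u = v
      · subst huv
        have : ∀ σ : Fin n → Fin 4,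
            (∏ w, x (σ w)) *
              (if ¬(G.Adj u u ↔ (cg G Bb Ww hB hW σ).Adj u u) then (1:ℝ) else 0) = 0 := by
          intro σ
          have : (G.Adj u u ↔ (cg G Bb Ww hB hW σ).Adj u u) :=
            iff_of_false (G.irrefl) ((cg G Bb Ww hB hW σ).irrefl)
          simp [this]
        rw [Finset.sum_congr rfl (fun σ _ => this σ)]
        simp [G.irrefl]
      · -- u ≠ v
        by_cases hadj : G.Adj u v
        · -- bound by cW term
          have hle : ∀ σ : Fin n → Fin 4,
              (∏ w, x (σ w)) *
                (if ¬(G.Adj u v ↔ (cg G Bb Ww hB hW σ).Adj u v) then (1:ℝ) else 0)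
              ≤ (∏ w, x (σ w)) * (if Ww (σ u) (σ v) then 1 else 0) := by
            intro σ
            apply mul_le_mul_of_nonneg_left _ (Finset.prod_nonneg fun w _ => (hx0 (σ w)).le)
            by_cases hdiff : ¬(G.Adj u v ↔ (cg G Bb Ww hB hW σ).Adj u v)
            · rw [if_pos hdiff]
              have hnadj' : ¬(cg G Bb Ww hB hW σ).Adj u v := fun h => hdiff (iff_of_true hadj h)
              have hWw : Ww (σ u) (σ v) = true := by
                by_contra hWw
                rw [Bool.not_eq_true] at hWw
                exact hnadj' ⟨huv, Or.inr ⟨hWw, hadj⟩⟩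
              rw [if_pos hWw]
            · rw [if_neg hdiff]
              positivity
          calc ∑ σ : Fin n → Fin 4, (∏ w, x (σ w)) *
                (if ¬(G.Adj u v ↔ (cg G Bb Ww hB hW σ).Adj u v) then (1:ℝ) else 0)
              ≤ ∑ σ : Fin n → Fin 4, (∏ w, x (σ w)) * (if Ww (σ u) (σ v) then (1:ℝ) else 0) :=
                Finset.sum_le_sum fun σ _ => hle σ
            _ = cW := by
                rw [marg x hx1 huv (fun i j => if Ww i j then (1:ℝ) else 0)]
            _ ≤ _ := by
                rw [if_pos hadj, if_neg (fun h => h.2 hadj)]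
                simp
        · -- bound by cB term
          have hle : ∀ σ : Fin n → Fin 4,
              (∏ w, x (σ w)) *
                (if ¬(G.Adj u v ↔ (cg G Bb Ww hB hW σ).Adj u v) then (1:ℝ) else 0)
              ≤ (∏ w, x (σ w)) * (if Bb (σ u) (σ v) then 1 else 0) := by
            intro σ
            apply mul_le_mul_of_nonneg_left _ (Finset.prod_nonneg fun w _ => (hx0 (σ w)).le)
            by_cases hdiff : ¬(G.Adj u v ↔ (cg G Bb Ww hB hW σ).Adj u v)
            · rw [if_pos hdiff]
              have hadj' : (cg G Bb Ww hB hW σ).Adj u v := by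
                by_contra h
                exact hdiff (iff_of_false hadj h)
              obtain ⟨-, h2⟩ := hadj'
              rcases h2 with h | ⟨-, ha⟩
              · rw [if_pos h]
              · exact absurd ha hadj
            · rw [if_neg hdiff]
              positivity
          calc ∑ σ : Fin n → Fin 4, (∏ w, x (σ w)) *
                (if ¬(G.Adj u v ↔ (cg G Bb Ww hB hW σ).Adj u v) then (1:ℝ) else 0)
              ≤ ∑ σ : Fin n → Fin 4, (∏ w, x (σ w)) * (if Bb (σ u) (σ v) then (1:ℝ) else 0) :=
                Finset.sum_le_sum fun σ _ => hle σ
            _ = cB := by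
                rw [marg x hx1 huv (fun i j => if Bb i j then (1:ℝ) else 0)]
            _ ≤ _ := by
                rw [if_neg hadj, if_pos ⟨huv, hadj⟩]
                simp
    calc ∑ p : Fin n × Fin n, ∑ σ : Fin n → Fin 4, (∏ w, x (σ w)) *
            (if ¬(G.Adj p.1 p.2 ↔ (cg G Bb Ww hB hW σ).Adj p.1 p.2) then (1:ℝ) else 0)
        ≤ ∑ p : Fin n × Fin n, ((if G.Adj p.1 p.2 then cW else 0)
            + (if p.1 ≠ p.2 ∧ ¬G.Adj p.1 p.2 then cB else 0)) :=
          Finset.sum_le_sum fun p _ => step2 p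
      _ = (e2 : ℝ) * cW + (a2 : ℝ) * cB := by
          rw [Finset.sum_add_distrib]
          congr 1
          · rw [Finset.sum_ite, Finset.sum_const, Finset.sum_const_zero, add_zero, he2]
            simp [mul_comm]
          · rw [Finset.sum_ite, Finset.sum_const, Finset.sum_const_zero, add_zero, ha2]
            simp [mul_comm]
  -- existence
  by_contra hcon
  have hcon2 : ∀ σ : Fin n → Fin 4, ((e2:ℝ) * cW + (a2:ℝ) * cB) < cnt σ := by
    intro σ
    by_contra h
    exact hcon ⟨σ, not_lt.mp h⟩
  have hwpos : ∀ σ : Fin n → Fin 4, 0 < ∏ w, x (σ w) :=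
    fun σ => Finset.prod_pos fun w _ => hx0 (σ w)
  have hlt : (e2 : ℝ) * cW + (a2 : ℝ) * cB
      < ∑ σ : Fin n → Fin 4, (∏ w, x (σ w)) * (cnt σ : ℝ) := by
    have h1 : ((e2 : ℝ) * cW + (a2 : ℝ) * cB) * ∑ σ : Fin n → Fin 4, (∏ w, x (σ w))
        = ∑ σ : Fin n → Fin 4, (∏ w, x (σ w)) * ((e2 : ℝ) * cW + (a2 : ℝ) * cB) := by
      rw [Finset.mul_sum]
      exact Finset.sum_congr rfl fun σ _ => mul_comm _ _
    have h2 : ∑ σ : Fin n → Fin 4, (∏ w, x (σ w)) * ((e2 : ℝ) * cW + (a2 : ℝ) * cB)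
        < ∑ σ : Fin n → Fin 4, (∏ w, x (σ w)) * (cnt σ : ℝ) := by
      apply Finset.sum_lt_sum_of_nonempty
      · exact Finset.univ_nonempty
      · intro σ _
        exact mul_lt_mul_of_pos_left (hcon2 σ) (hwpos σ)
    calc (e2 : ℝ) * cW + (a2 : ℝ) * cB
        = ((e2 : ℝ) * cW + (a2 : ℝ) * cB) * ∑ σ : Fin n → Fin 4, (∏ w, x (σ w)) := by
          rw [sum_weights x hx1, mul_one]
      _ = _ := h1
      _ < _ := h2
  exact absurd havg (not_le.mpr hlt)

end ExistsGood

section Final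
open Finset

lemma hBA : ∀ i j, BbA i j = BbA j i := by decide
lemma hWA : ∀ i j, WwA i j = WwA j i := by decide
lemma hBB : ∀ i j, BbB i j = BbB j i := by decide
lemma hWB : ∀ i j, WwB i j = WwB j i := by decide
lemma hdisjA : ∀ i j, BbA i j = true → WwA i j = true → False := by decide
lemma hdisjB : ∀ i j, BbB i j = true → WwB i j = true → False := by decide

noncomputable def xA : Fin 4 → ℝ :=
  ![(3 - Real.sqrt 5)/4, (3 - Real.sqrt 5)/4, (Real.sqrt 5 - 1)/4, (Real.sqrt 5 - 1)/4]

noncomputable def xB : Fin 4 → ℝ := ![1/4, 1/4, 1/4, 1/4]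

lemma sqrt5_sq : Real.sqrt 5 ^ 2 = 5 := Real.sq_sqrt (by norm_num)
lemma sqrt5_lb : (2 : ℝ) < Real.sqrt 5 := by
  nlinarith [sqrt5_sq, Real.sqrt_nonneg 5]
lemma sqrt5_ub : Real.sqrt 5 < 3 := by
  nlinarith [sqrt5_sq, Real.sqrt_nonneg 5]

lemma hxA0 : ∀ i, 0 < xA i := by
  intro i
  fin_cases i <;> simp [xA] <;> nlinarith [sqrt5_lb, sqrt5_ub]

lemma hxA1 : ∑ i, xA i = 1 := by
  simp [Fin.sum_univ_four, xA]
  ring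

lemma hxB0 : ∀ i, 0 < xB i := by
  intro i
  fin_cases i <;> norm_num [xB]

lemma hxB1 : ∑ i, xB i = 1 := by
  simp [Fin.sum_univ_four, xB]
  norm_num

lemma cWA_eq : ∑ i : Fin 4, ∑ j : Fin 4, xA i * xA j * (if WwA i j then (1:ℝ) else 0)
    = 2*((3 - Real.sqrt 5)/4)^2 + 2*((Real.sqrt 5 - 1)/4)^2 := by
  simp [Fin.sum_univ_four, xA, WwA]
  ring

lemma cBA_eq : ∑ i : Fin 4, ∑ j : Fin 4, xA i * xA j * (if BbA i j then (1:ℝ) else 0)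
    = 2*((3 - Real.sqrt 5)/4)^2 := by
  simp [Fin.sum_univ_four, xA, BbA]
  ring

lemma cWB_eq : ∑ i : Fin 4, ∑ j : Fin 4, xB i * xB j * (if WwB i j then (1:ℝ) else 0)
    = 0 := by
  simp [WwB]

lemma cBB_eq : ∑ i : Fin 4, ∑ j : Fin 4, xB i * xB j * (if BbB i j then (1:ℝ) else 0)
    = 1/2 := by
  simp (config := { decide := true }) [Fin.sum_univ_four, xB, BbB]
  norm_num

lemma pairs_count {n : ℕ} (G : SimpleGraph (Fin n)) [DecidableRel G.Adj] :
    #(univ.filter fun p : Fin n × Fin n => G.Adj p.1 p.2) +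
    #(univ.filter fun p : Fin n × Fin n => p.1 ≠ p.2 ∧ ¬ G.Adj p.1 p.2) = 2 * n.choose 2 := by
  have h0 := Finset.card_filter_add_card_filter_not
    (s := (univ : Finset (Fin n × Fin n)).filter fun p => p.1 ≠ p.2)
    (p := fun p : Fin n × Fin n => G.Adj p.1 p.2)
  rw [Finset.filter_filter, Finset.filter_filter] at h0
  have e1 : ((univ : Finset (Fin n × Fin n)).filter fun p => p.1 ≠ p.2 ∧ G.Adj p.1 p.2)
      = (univ : Finset (Fin n × Fin n)).filter fun p => G.Adj p.1 p.2 := by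
    apply Finset.filter_congr
    intro p _
    exact ⟨fun h => h.2, fun h => ⟨h.ne, h⟩⟩
  rw [e1] at h0
  have e2 : ((univ : Finset (Fin n × Fin n)).filter fun p => p.1 ≠ p.2)
      = (univ : Finset (Fin n)).offDiag := by ext; simp
  rw [e2, Finset.offDiag_card, Finset.card_univ, Fintype.card_fin] at h0
  rw [h0]
  -- 2 * n.choose 2 = n * n - n
  cases n with
  | zero => simp
  | succ k =>
    rw [Nat.choose_two_right]
    have hd : 2 ∣ (k+1) * ((k+1) - 1) := by
      simp only [Nat.add_sub_cancel]
      rcases Nat.even_mul_succ_self k with ⟨t, ht⟩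
      exact ⟨t, by linarith [ht]⟩
    rw [Nat.mul_div_cancel' hd]
    simp only [Nat.add_sub_cancel]
    rw [Nat.mul_succ]
    rw [Nat.add_sub_cancel]

lemma graph_bound {n : ℕ} (G : SimpleGraph (Fin n)) :
    (distForb H9 G : ℝ) ≤ (3 - Real.sqrt 5)/4 * (n.choose 2 : ℝ) := by
  classical
  set s : ℝ := Real.sqrt 5 with hs
  have hsq : s^2 = 5 := sqrt5_sq
  have hs2 : (2:ℝ) < s := sqrt5_lb
  have hs3 : s < 3 := sqrt5_ub
  set M : ℝ := (n.choose 2 : ℝ) with hM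
  set e2 : ℕ := #(univ.filter fun p : Fin n × Fin n => G.Adj p.1 p.2) with he2
  set a2 : ℕ := #(univ.filter fun p : Fin n × Fin n => p.1 ≠ p.2 ∧ ¬ G.Adj p.1 p.2) with ha2
  have hM0 : 0 ≤ M := by rw [hM]; positivity
  have hpc : (e2 : ℝ) + (a2 : ℝ) = 2 * M := by
    rw [hM]
    have := pairs_count G
    rw [← he2, ← ha2] at this
    exact_mod_cast this
  have hbound : ∀ (Bb Ww : Fin 4 → Fin 4 → Bool) (x : Fin 4 → ℝ)
      (hB : ∀ i j, Bb i j = Bb j i) (hW : ∀ i j, Ww i j = Ww j i)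
      (hdisj : ∀ i j, Bb i j = true → Ww i j = true → False)
      (hfree : ∀ φ : ZMod 9 → Fin 4,
        (∀ i j, H9.Adj i j → Ww (φ i) (φ j) = false) →
        (∀ i j, i ≠ j → ¬H9.Adj i j → Bb (φ i) (φ j) = false) → False)
      (hx0 : ∀ i, 0 < x i) (hx1 : ∑ i, x i = 1),
      2 * (distForb H9 G : ℝ) ≤
        (e2 : ℝ) * (∑ i : Fin 4, ∑ j : Fin 4, x i * x j * (if Ww i j then 1 else 0))
        + (a2 : ℝ) * (∑ i : Fin 4, ∑ j : Fin 4, x i * x j * (if Bb i j then 1 else 0)) := by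
    intro Bb Ww x hB hW hdisj hfree hx0 hx1
    obtain ⟨σ, hσ⟩ := exists_good G Bb Ww x hB hW hx0 hx1
    have hd1 : distForb H9 G ≤ editDist G (cg G Bb Ww hB hW σ) :=
      Nat.sInf_le ⟨cg G Bb Ww hB hW σ, cg_free G Bb Ww hB hW hdisj hfree σ, rfl⟩
    have hd2 := editDist_cnt G (cg G Bb Ww hB hW σ)
    calc 2 * (distForb H9 G : ℝ)
        ≤ 2 * (editDist G (cg G Bb Ww hB hW σ) : ℝ) := by
          have h := (Nat.cast_le (α := ℝ)).mpr hd1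
          linarith
      _ = (#(univ.filter fun p : Fin n × Fin n =>
            ¬(G.Adj p.1 p.2 ↔ (cg G Bb Ww hB hW σ).Adj p.1 p.2)) : ℝ) := by
          rw [← Nat.cast_ofNat, ← Nat.cast_mul, hd2]
      _ ≤ _ := hσ
  have hA := hbound BbA WwA xA hBA hWA hdisjA freeA hxA0 hxA1
  have hB := hbound BbB WwB xB hBB hWB hdisjB freeB hxB0 hxB1
  rw [cWA_eq, cBA_eq] at hA
  rw [cWB_eq, cBB_eq] at hB
  have ha2' : (a2 : ℝ) = 2 * M - e2 := by linarith
  rw [ha2'] at hA hB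
  have he20 : (0:ℝ) ≤ (e2 : ℝ) := Nat.cast_nonneg _
  have ha20 : (0:ℝ) ≤ (a2 : ℝ) := Nat.cast_nonneg _
  have he2ub : (e2 : ℝ) ≤ 2 * M := by linarith
  by_cases hcase : (e2 : ℝ) ≤ (s - 1) * M
  · -- use construction A
    nlinarith [hA, hsq, hs2, hs3, hM0, he20, hcase]
  · -- use construction B
    push_neg at hcase
    nlinarith [hB, hsq, hs2, hs3, hM0, he2ub, hcase.le]

end Final

theorem editDistance_H9_upper :
    ∀ ε : ℝ, 0 < ε → ∃ N : ℕ, ∀ n : ℕ, N ≤ n →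
      (distForbN H9 n : ℝ) ≤ ((3 - Real.sqrt 5) / 4 + ε) * (n.choose 2 : ℝ) := by
  intro ε hε
  refine ⟨0, fun n _ => ?_⟩
  have hM0 : (0:ℝ) ≤ (n.choose 2 : ℝ) := Nat.cast_nonneg _
  have ht0 : (0:ℝ) ≤ (3 - Real.sqrt 5) / 4 * (n.choose 2 : ℝ) := by
    have := sqrt5_ub
    have h1 : (0:ℝ) ≤ (3 - Real.sqrt 5) / 4 := by linarith
    exact mul_nonneg h1 hM0
  have hub : (distForbN H9 n : ℝ) ≤ (3 - Real.sqrt 5) / 4 * (n.choose 2 : ℝ) := by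
    have hK : ∀ d ∈ {d | ∃ G : SimpleGraph (Fin n), d = distForb H9 G},
        d ≤ ⌊(3 - Real.sqrt 5) / 4 * (n.choose 2 : ℝ)⌋₊ := by
      rintro d ⟨G, rfl⟩
      exact Nat.le_floor (graph_bound G)
    have h1 : distForbN H9 n ≤ ⌊(3 - Real.sqrt 5) / 4 * (n.choose 2 : ℝ)⌋₊ :=
      csSup_le ⟨distForb H9 ⊥, ⟨⊥, rfl⟩⟩ hK
    calc (distForbN H9 n : ℝ)
        ≤ (⌊(3 - Real.sqrt 5) / 4 * (n.choose 2 : ℝ)⌋₊ : ℝ) := Nat.cast_le.mpr h1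
      _ ≤ _ := Nat.floor_le ht0
  have hmono : (3 - Real.sqrt 5) / 4 * (n.choose 2 : ℝ)
      ≤ ((3 - Real.sqrt 5) / 4 + ε) * (n.choose 2 : ℝ) := by
    apply mul_le_mul_of_nonneg_right _ hM0
    linarith
  linarith
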